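/- The 1-dimensional Weisfeiler–Leman algorithm (color refinement) distinguishes any two non-isomorphic finite directed, labeled trees; i.e., if two rooted labeled trees receive the same stable coloring at their roots, then they are isomorphic. -/

import Mathlib

/-- Finite rooted directed trees with node labels in `L` and edge labels in `E`
(children are grouped together with the label of the edge leading to them). -/
inductive LTree (L E : Type) : Type
  | node : L → List (E × LTree L E) → LTree L E

/-- The type of 1-WL (color refinement) colors after `i` rounds: the initial color is
the node label; thereafter a color is the previous color of the node paired with the
multiset of (edge label, previous color) pairs of its out-neighbors. -/
def WLColor (L E : Type) : ℕ → Type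
  | 0 => L
  | i + 1 => WLColor L E i × Multiset (E × WLColor L E i)

/-- The color-refinement coloring after `i` rounds, at the root of a tree. -/
def wlCol {L E : Type} : (i : ℕ) → LTree L E → WLColor L E i
  | 0, .node l _ => l
  | i + 1, .node l cs => (wlCol i (.node l cs), ↑(cs.map fun c => (c.1, wlCol i c.2)))

/-- Isomorphism of rooted, labeled directed trees: roots have equal labels and the
children correspond under a bijection preserving edge labels and (recursively)
isomorphism of subtrees. -/
inductive LTree.Iso {L E : Type} : LTree L E → LTree L E → Prop
  | node (l : L) (cs ds : List (E × LTree L E)) (σ : Fin cs.length ≃ Fin ds.length)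
      (hlab : ∀ i : Fin cs.length, (cs.get i).1 = (ds.get (σ i)).1)
      (hiso : ∀ i : Fin cs.length, LTree.Iso (cs.get i).2 (ds.get (σ i)).2) :
      LTree.Iso (.node l cs) (.node l ds)

lemma perm_get_equiv {α : Type*} : ∀ {l l' : List α}, l.Perm l' →
    ∃ σ : Fin l.length ≃ Fin l'.length, ∀ i, l.get i = l'.get (σ i) := by
  intro l l' h
  induction h with
  | nil => exact ⟨Equiv.refl _, fun i => i.elim0⟩
  | cons x p ih =>
    obtain ⟨σ, hσ⟩ := ih
    refine ⟨(finSuccEquiv _).trans ((Equiv.optionCongr σ).trans (finSuccEquiv _).symm), ?_⟩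
    intro i
    induction i using Fin.cases with
    | zero => simp
    | succ j => simpa using hσ j
  | swap x y l =>
    refine ⟨Equiv.swap (⟨0, by simp⟩ : Fin (y::x::l).length) ⟨1, by simp⟩, ?_⟩
    rintro ⟨n, hn⟩
    match n, hn with
    | 0, _ => simp [Equiv.swap_apply_def]
    | 1, _ => simp [Equiv.swap_apply_def]
    | (n+2), hn => simp [Equiv.swap_apply_def, Fin.ext_iff]
  | trans p q ih1 ih2 =>
    obtain ⟨σ, hσ⟩ := ih1
    obtain ⟨τ, hτ⟩ := ih2
    exact ⟨σ.trans τ, fun i => (hσ i).trans (hτ (σ i))⟩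

/-- height of a tree (a leaf has height 1) -/
def LTree.ht {L E : Type} : LTree L E → ℕ
  | .node _ cs => (cs.attach.map (fun c => LTree.ht c.1.2)).foldr max 0 + 1
decreasing_by
  have h1 := List.sizeOf_lt_of_mem c.2
  obtain ⟨⟨e, t⟩, hm⟩ := c
  simp at h1 ⊢
  omega

lemma ht_pos {L E : Type} (t : LTree L E) : 1 ≤ t.ht := by
  cases t with | node l cs => rw [LTree.ht]; omega

lemma le_foldr_max {l : List ℕ} {x : ℕ} (h : x ∈ l) : x ≤ l.foldr max 0 := by
  induction l with
  | nil => simp at h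
  | cons a l ih =>
    rcases List.mem_cons.1 h with h | h
    · subst h; exact le_max_left _ _
    · exact le_trans (ih h) (le_max_right _ _)

lemma ht_child_lt {L E : Type} {l : L} {cs : List (E × LTree L E)} {c : E × LTree L E}
    (h : c ∈ cs) : c.2.ht < (LTree.node l cs).ht := by
  rw [LTree.ht]
  have hm : c.2.ht ∈ cs.attach.map (fun c => LTree.ht c.1.2) :=
    List.mem_map.2 ⟨⟨c, h⟩, ⟨List.mem_attach _ _, rfl⟩⟩
  exact Nat.lt_succ_of_le (le_foldr_max hm)

lemma wl_label {L E : Type} : ∀ (i : ℕ) (l m : L) (cs ds : List (E × LTree L E)),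
    wlCol i (LTree.node l cs) = wlCol i (LTree.node m ds) → l = m := by
  intro i
  induction i with
  | zero => intro l m cs ds h; exact h
  | succ i ih =>
    intro l m cs ds h
    exact ih l m cs ds (congrArg Prod.fst h)

lemma wl_bounded {L E : Type} : ∀ (i : ℕ) (t u : LTree L E),
    t.ht ≤ i + 1 → u.ht ≤ i + 1 → wlCol i t = wlCol i u → LTree.Iso t u := by
  intro i
  induction i with
  | zero =>
    rintro ⟨l, cs⟩ ⟨m, ds⟩ h1 h2 h
    have hl : l = m := h
    subst hl
    have hcs : cs = [] := by
      cases cs with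
      | nil => rfl
      | cons c cs' =>
        exfalso
        have := ht_child_lt (l := l) (c := c) (cs := c :: cs') (List.mem_cons_self)
        have := ht_pos c.2
        omega
    have hds : ds = [] := by
      cases ds with
      | nil => rfl
      | cons c ds' =>
        exfalso
        have := ht_child_lt (l := l) (c := c) (cs := c :: ds') (List.mem_cons_self)
        have := ht_pos c.2
        omega
    subst hcs; subst hds
    exact LTree.Iso.node l [] [] (Equiv.refl _) (fun i => i.elim0) (fun i => i.elim0)
  | succ i ih =>
    rintro ⟨l, cs⟩ ⟨m, ds⟩ h1 h2 h
    have hl : l = m := wl_label (i+1) l m cs ds h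
    subst hl
    have hmul : (↑(cs.map fun c => (c.1, wlCol i c.2)) : Multiset (E × WLColor L E i)) =
        ↑(ds.map fun c => (c.1, wlCol i c.2)) := congrArg Prod.snd h
    have hperm : (cs.map fun c => (c.1, wlCol i c.2)).Perm
        (ds.map fun c => (c.1, wlCol i c.2)) := Multiset.coe_eq_coe.1 hmul
    obtain ⟨σ, hσ⟩ := perm_get_equiv hperm
    have hlen1 : (cs.map fun c => (c.1, wlCol i c.2)).length = cs.length := by simp
    have hlen2 : (ds.map fun c => (c.1, wlCol i c.2)).length = ds.length := by simp
    let τ : Fin cs.length ≃ Fin ds.length :=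
      (finCongr hlen1.symm).trans (σ.trans (finCongr hlen2))
    have key : ∀ j : Fin cs.length,
        ((cs.get j).1, wlCol i (cs.get j).2) = ((ds.get (τ j)).1, wlCol i (ds.get (τ j)).2) := by
      intro j
      have := hσ (finCongr hlen1.symm j)
      simpa [τ, List.getElem_map] using this
    have key' : ∀ j : Fin cs.length, (cs.get j).1 = (ds.get (τ j)).1 ∧
        wlCol i (cs.get j).2 = wlCol i (ds.get (τ j)).2 :=
      fun j => by simpa [Prod.ext_iff] using key j
    refine LTree.Iso.node l cs ds τ (fun j => (key' j).1) (fun j => ?_)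
    refine ih _ _ ?_ ?_ (key' j).2
    · have := ht_child_lt (l := l) (List.get_mem cs ⟨j.1, j.2⟩)
      simp only [Fin.eta] at this
      omega
    · have := ht_child_lt (l := l) (List.get_mem ds ⟨(τ j).1, (τ j).2⟩)
      simp only [Fin.eta] at this
      omega


/-- Color refinement (the 1-dimensional Weisfeiler–Leman algorithm)
distinguishes non-isomorphic finite directed labeled trees: if two rooted labeled trees
receive the same stable coloring at their roots (equivalently, the same color at every
round), then they are isomorphic. -/
theorem colorRefinement_distinguishes_trees {L E : Type} (t u : LTree L E)
    (h : ∀ i : ℕ, wlCol i t = wlCol i u) : LTree.Iso t u := by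
  exact wl_bounded (t.ht + u.ht) t u (by have := ht_pos u; omega) (by have := ht_pos t; omega)
    (h _)
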